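/- Let Q be a finite poset and, for n ≥ 1, let N(Q)(n) be the set of syntax trees on Q with n leaves in which, for every internal node labeled a, any internal left child is labeled by an element incomparable with a and any internal right child is labeled either by a itself or by an element incomparable with a. Define s_Q recursively by sending the single leaf to the single leaf, and sending a tree of N(Q) with root labeled a — written uniquely as the maximal right comb of a-labeled nodes with subtrees s₁, …, s_ℓ (ℓ ≥ 2), each s_i being a leaf or having root label incomparable with a — to the tree whose root is an internal node labeled a with the ℓ children s_Q(s₁), …, s_Q(s_ℓ). Then for every n ≥ 1, s_Q is a bijection from N(Q)(n) onto the set of Q-alternating Schröder trees with n leaves. -/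

import Mathlib

open scoped Classical

/-- Syntax trees on `Q`: planar binary trees whose internal nodes are labeled by
elements of `Q`. -/
inductive STree (Q : Type*) where
  | leaf : STree Q
  | node : Q → STree Q → STree Q → STree Q

/-- The label of the root of a syntax tree, `none` for a leaf. -/
def STree.rootLabel {Q : Type*} : STree Q → Option Q
  | .leaf => none
  | .node a _ _ => some a

/-- The number of leaves of a syntax tree. -/
def STree.numLeaves {Q : Type*} : STree Q → ℕ
  | .leaf => 1
  | .node _ l r => l.numLeaves + r.numLeaves

/-- The trees of `N(Q)`: at every internal node labeled `a`, any internal left child is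
labeled by an element incomparable with `a` and any internal right child is labeled by
`a` itself or by an element incomparable with `a`. -/
def NormalShape {Q : Type*} [PartialOrder Q] : STree Q → Prop
  | .leaf => True
  | .node a l r => NormalShape l ∧ NormalShape r ∧
      (∀ b : Q, l.rootLabel = some b → ¬ a ≤ b ∧ ¬ b ≤ a) ∧
      (∀ b : Q, r.rootLabel = some b → b = a ∨ (¬ a ≤ b ∧ ¬ b ≤ a))

/-- Planar rooted trees with internal nodes labeled by `Q` and an arbitrary (finite)
list of children.  `Q`-Schröder trees are those satisfying `SchWF` below. -/
inductive SchTree (Q : Type*) where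
  | leaf : SchTree Q
  | node : Q → List (SchTree Q) → SchTree Q

/-- Well-formedness for `Q`-Schröder trees: every internal node has at least two
children. -/
inductive SchWF {Q : Type*} : SchTree Q → Prop
  | leaf : SchWF .leaf
  | node (a : Q) (ts : List (SchTree Q)) :
      2 ≤ ts.length → (∀ t ∈ ts, SchWF t) → SchWF (.node a ts)

/-- A tree is `Q`-alternating if whenever an internal node labeled `a` has an
internal-node child labeled `b`, the elements `a` and `b` are incomparable in `Q`. -/
inductive Alt {Q : Type*} [PartialOrder Q] : SchTree Q → Prop
  | leaf : Alt .leaf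
  | node (a : Q) (ts : List (SchTree Q)) :
      (∀ t ∈ ts, Alt t) →
      (∀ (b : Q) (cs : List (SchTree Q)), SchTree.node b cs ∈ ts → ¬ a ≤ b ∧ ¬ b ≤ a) →
      Alt (.node a ts)

mutual
  /-- The number of leaves of a Schröder tree. -/
  def schLeaves {Q : Type*} : SchTree Q → ℕ
    | .leaf => 1
    | .node _ ts => schLeavesList ts

  /-- Total number of leaves of a list of Schröder trees. -/
  def schLeavesList {Q : Type*} : List (SchTree Q) → ℕ
    | [] => 0
    | t :: ts => schLeaves t + schLeavesList ts
end

mutual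
  /-- The map `s_Q` sending a syntax tree to a Schröder tree: a tree with root label `a`
  is written as the maximal right comb of `a`-labeled nodes with subtrees
  `s₁, …, s_ℓ`, and is sent to the corolla-like node labeled `a` with children
  `s_Q(s₁), …, s_Q(s_ℓ)`. -/
  noncomputable def sQ {Q : Type*} [DecidableEq Q] : STree Q → SchTree Q
    | .leaf => .leaf
    | .node a l r => .node a (sQ l :: comb a r)

  /-- The list of images of the subtrees hanging from the maximal right comb of
  `a`-labeled nodes. -/
  noncomputable def comb {Q : Type*} [DecidableEq Q] (a : Q) : STree Q → List (SchTree Q)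
    | .leaf => [.leaf]
    | .node b l r =>
        if b = a then sQ l :: comb a r else [.node b (sQ l :: comb b r)]
end

/-! ### Auxiliary material for the bijection -/

mutual
  /-- Inverse of `sQ`. -/
  noncomputable def tQ {Q : Type*} : SchTree Q → STree Q
    | .leaf => .leaf
    | .node a ts => uncombNode a ts

  /-- Rebuild the right comb. -/
  noncomputable def uncombNode {Q : Type*} (a : Q) : List (SchTree Q) → STree Q
    | [] => .leaf
    | [t] => tQ t
    | t :: ts => .node a (tQ t) (uncombNode a ts)
end

section Aux

variable {Q : Type*} [DecidableEq Q] [PartialOrder Q]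

theorem comb_ne_nil (a : Q) (t : STree Q) : comb a t ≠ [] := by
  cases t with
  | leaf => simp [comb]
  | node b l r => simp only [comb]; split <;> simp

theorem sQ_rootLabel {t : STree Q} {b : Q} {cs : List (SchTree Q)}
    (h : sQ t = .node b cs) : t.rootLabel = some b := by
  cases t with
  | leaf => simp [sQ] at h
  | node c l r =>
    simp only [sQ, SchTree.node.injEq] at h
    simp [STree.rootLabel, h.1]

mutual
theorem tQ_sQ : ∀ (t : STree Q), tQ (sQ t) = t
  | .leaf => by simp [sQ, tQ]
  | .node a l r => by
    obtain ⟨c, cs, hc⟩ := List.exists_cons_of_ne_nil (comb_ne_nil a r)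
    have hl := tQ_sQ l
    have hr := uncomb_comb a r
    simp only [sQ, tQ, hc, uncombNode]
    rw [← hc, hl, hr]

theorem uncomb_comb : ∀ (a : Q) (t : STree Q), uncombNode a (comb a t) = t
  | a, .leaf => by simp [comb, uncombNode, tQ]
  | a, .node b l r => by
    by_cases hba : b = a
    · subst hba
      obtain ⟨c, cs, hc⟩ := List.exists_cons_of_ne_nil (comb_ne_nil b r)
      have hl := tQ_sQ l
      have hr := uncomb_comb b r
      simp only [comb, if_pos rfl, ↓reduceIte, hc, uncombNode]
      rw [← hc, hl, hr]
    · obtain ⟨c, cs, hc⟩ := List.exists_cons_of_ne_nil (comb_ne_nil b r)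
      have hl := tQ_sQ l
      have hr := uncomb_comb b r
      simp only [comb, if_neg hba, uncombNode, tQ, hc]
      rw [← hc, hl, hr]
end

mutual
theorem sQ_good : ∀ (t : STree Q), NormalShape t →
    SchWF (sQ t) ∧ Alt (sQ t) ∧ schLeaves (sQ t) = t.numLeaves
  | .leaf, _ => by
    refine ⟨SchWF.leaf, Alt.leaf, ?_⟩
    simp [sQ, schLeaves, STree.numLeaves]
  | .node a l r, h => by
    obtain ⟨hl, hr, hlr, hrr⟩ := h
    obtain ⟨hlw, hla, hln⟩ := sQ_good l hl
    obtain ⟨h1, h2, h3⟩ := comb_good a r hr hrr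
    refine ⟨?_, ?_, ?_⟩
    · refine SchWF.node a _ ?_ ?_
      · obtain ⟨c, cs, hc⟩ := List.exists_cons_of_ne_nil (comb_ne_nil a r)
        simp [hc]
      · intro t ht
        rcases List.mem_cons.mp ht with h | h
        · exact h ▸ hlw
        · exact (h1 t h).1
    · refine Alt.node a _ ?_ ?_
      · intro t ht
        rcases List.mem_cons.mp ht with h | h
        · exact h ▸ hla
        · exact (h1 t h).2
      · intro b cs hmem
        rcases List.mem_cons.mp hmem with h | h
        · exact hlr b (sQ_rootLabel h.symm)
        · exact h2 b cs h
    · simp only [sQ, schLeaves, schLeavesList, STree.numLeaves, hln, h3]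

theorem comb_good : ∀ (a : Q) (t : STree Q), NormalShape t →
    (∀ b : Q, t.rootLabel = some b → b = a ∨ (¬ a ≤ b ∧ ¬ b ≤ a)) →
    (∀ s ∈ comb a t, SchWF s ∧ Alt s) ∧
    (∀ (b : Q) (cs : List (SchTree Q)), SchTree.node b cs ∈ comb a t →
      ¬ a ≤ b ∧ ¬ b ≤ a) ∧
    schLeavesList (comb a t) = t.numLeaves
  | a, .leaf, _, _ => by
    refine ⟨?_, ?_, ?_⟩
    · intro s hs; simp [comb] at hs; exact hs ▸ ⟨SchWF.leaf, Alt.leaf⟩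
    · intro b cs hs; simp [comb] at hs
    · simp [comb, schLeavesList, schLeaves, STree.numLeaves]
  | a, .node b l r, h, hroot => by
    obtain ⟨hl, hr, hlr, hrr⟩ := h
    by_cases hba : b = a
    · subst hba
      obtain ⟨hlw, hla, hln⟩ := sQ_good l hl
      obtain ⟨h1, h2, h3⟩ := comb_good b r hr hrr
      refine ⟨?_, ?_, ?_⟩
      · intro s hs
        rw [comb, if_pos rfl] at hs
        rcases List.mem_cons.mp hs with h | h
        · exact h ▸ ⟨hlw, hla⟩
        · exact h1 s h
      · intro c cs hs
        rw [comb, if_pos rfl] at hs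
        rcases List.mem_cons.mp hs with h | h
        · exact hlr c (sQ_rootLabel h.symm)
        · exact h2 c cs h
      · rw [comb, if_pos rfl]
        simp only [schLeavesList, STree.numLeaves, hln, h3]
    · have hinc : ¬ a ≤ b ∧ ¬ b ≤ a := by
        rcases hroot b rfl with h | h
        · exact absurd h hba
        · exact h
      obtain ⟨hw, ha', hn⟩ := sQ_good (.node b l r) ⟨hl, hr, hlr, hrr⟩
      refine ⟨?_, ?_, ?_⟩
      · intro s hs
        rw [comb, if_neg hba] at hs
        simp only [List.mem_singleton] at hs
        subst hs
        exact ⟨hw, ha'⟩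
      · intro c cs hs
        rw [comb, if_neg hba] at hs
        simp only [List.mem_singleton, SchTree.node.injEq] at hs
        exact hs.1 ▸ hinc
      · rw [comb, if_neg hba]
        have : schLeavesList [SchTree.node b (sQ l :: comb b r)]
            = schLeaves (SchTree.node b (sQ l :: comb b r)) + 0 := rfl
        rw [this]
        rw [sQ] at hn
        simpa using hn
end

theorem tQ_node_rootLabel {b : Q} {cs : List (SchTree Q)} (h : 2 ≤ cs.length) :
    (tQ (SchTree.node b cs)).rootLabel = some b := by
  match cs, h with
  | c :: c' :: rest, _ => simp [tQ, uncombNode, STree.rootLabel]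

theorem tQ_rootLabel_node {s : SchTree Q} (hw : SchWF s) {b : Q}
    (h : (tQ s).rootLabel = some b) : ∃ cs, s = SchTree.node b cs := by
  cases s with
  | leaf => simp [tQ, STree.rootLabel] at h
  | node c cs =>
    cases hw with
    | node _ _ hlen _ =>
      rw [tQ_node_rootLabel hlen] at h
      exact ⟨cs, by simp_all⟩

theorem comb_of_root_ne {x : STree Q} {b : Q} (hx : x.rootLabel = some b)
    (a : Q) (hba : b ≠ a) : comb a x = [sQ x] := by
  cases x with
  | leaf => simp [STree.rootLabel] at hx
  | node c l r =>
    simp only [STree.rootLabel, Option.some.injEq] at hx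
    subst hx
    rw [comb, if_neg hba, sQ]

mutual
theorem tQ_good : ∀ (s : SchTree Q), SchWF s → Alt s →
    NormalShape (tQ s) ∧ (tQ s).numLeaves = schLeaves s ∧ sQ (tQ s) = s
  | .leaf, _, _ => by
    refine ⟨trivial, ?_, ?_⟩ <;> simp [tQ, sQ, schLeaves, STree.numLeaves]
  | .node a ts, hw, ha => by
    have hlen : 2 ≤ ts.length := by cases hw with | node _ _ h _ => exact h
    have hwts : ∀ t ∈ ts, SchWF t := by cases hw with | node _ _ _ h => exact h
    have hats : ∀ t ∈ ts, Alt t := by cases ha with | node _ _ h _ => exact h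
    have hinc : ∀ (b : Q) (cs : List (SchTree Q)), SchTree.node b cs ∈ ts →
        ¬ a ≤ b ∧ ¬ b ≤ a := by cases ha with | node _ _ _ h => exact h
    have hne : ts ≠ [] := by
      intro h; rw [h] at hlen; simp at hlen
    obtain ⟨hN, hnum, hcomb, _⟩ := uncomb_good a ts hne hwts hats hinc
    refine ⟨hN, ?_, ?_⟩
    · show (uncombNode a ts).numLeaves = _
      rw [hnum]; rfl
    · match ts, hlen, hcomb with
      | t :: t' :: rest, _, hcomb =>
        have heq : uncombNode a (t :: t' :: rest)
            = .node a (tQ t) (uncombNode a (t' :: rest)) := by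
          rw [uncombNode]; simp
        show sQ (uncombNode a (t :: t' :: rest)) = _
        rw [heq] at hcomb ⊢
        rw [comb, if_pos rfl] at hcomb
        rw [sQ, hcomb]

theorem uncomb_good : ∀ (a : Q) (ts : List (SchTree Q)), ts ≠ [] →
    (∀ t ∈ ts, SchWF t) → (∀ t ∈ ts, Alt t) →
    (∀ (b : Q) (cs : List (SchTree Q)), SchTree.node b cs ∈ ts →
      ¬ a ≤ b ∧ ¬ b ≤ a) →
    NormalShape (uncombNode a ts) ∧
    (uncombNode a ts).numLeaves = schLeavesList ts ∧
    comb a (uncombNode a ts) = ts ∧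
    (∀ b : Q, (uncombNode a ts).rootLabel = some b →
      b = a ∨ (¬ a ≤ b ∧ ¬ b ≤ a))
  | a, [], hne, _, _, _ => absurd rfl hne
  | a, [t], _, hw, ha, hinc => by
    have hwt := hw t (by simp)
    obtain ⟨hN, hnum, hsq⟩ := tQ_good t hwt (ha t (by simp))
    refine ⟨hN, ?_, ?_, ?_⟩
    · rw [uncombNode, hnum]; simp [schLeavesList]
    · rw [uncombNode]
      cases t with
      | leaf => simp [tQ, comb]
      | node b cs =>
        have hb : ¬ a ≤ b ∧ ¬ b ≤ a := hinc b cs (by simp)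
        have hba : b ≠ a := fun h => hb.2 (h ▸ le_refl a)
        have hroot : (tQ (SchTree.node b cs)).rootLabel = some b := by
          cases hwt with
          | node _ _ hlen _ => exact tQ_node_rootLabel hlen
        rw [comb_of_root_ne hroot a hba, hsq]
    · intro b hb
      rw [uncombNode] at hb
      obtain ⟨cs, rfl⟩ := tQ_rootLabel_node hwt hb
      exact Or.inr (hinc b cs (by simp))
  | a, t :: t' :: rest, _, hw, ha, hinc => by
    have hne' : t' :: rest ≠ [] := by simp
    obtain ⟨hN', hnum', hcomb', hroot'⟩ := uncomb_good a (t' :: rest) hne'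
      (fun x hx => hw x (by simp [hx])) (fun x hx => ha x (by simp [hx]))
      (fun b cs hx => hinc b cs (by simp [hx]))
    have hwt := hw t (by simp)
    obtain ⟨hN, hnum, hsq⟩ := tQ_good t hwt (ha t (by simp))
    have heq : uncombNode a (t :: t' :: rest)
        = .node a (tQ t) (uncombNode a (t' :: rest)) := by
      rw [uncombNode]; simp
    refine ⟨?_, ?_, ?_, ?_⟩
    · rw [heq]
      refine ⟨hN, hN', ?_, hroot'⟩
      intro b hb
      obtain ⟨cs, rfl⟩ := tQ_rootLabel_node hwt hb
      exact hinc b cs (by simp)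
    · rw [heq]
      show (tQ t).numLeaves + (uncombNode a (t' :: rest)).numLeaves = _
      rw [hnum, hnum']; rfl
    · rw [heq, comb, if_pos rfl, hsq, hcomb']
    · intro b hb
      rw [heq] at hb
      simp only [STree.rootLabel, Option.some.injEq] at hb
      exact Or.inl hb.symm
end

end Aux

/-- For every `n ≥ 1`, the map `s_Q` is a bijection from the set `N(Q)(n)` of syntax
trees with `n` leaves of normal shape onto the set of `Q`-alternating Schröder trees
with `n` leaves. -/
theorem sQ_bijection {Q : Type*} [Fintype Q] [DecidableEq Q] [PartialOrder Q]
    (n : ℕ) (hn : 1 ≤ n) :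
    Set.BijOn sQ {t : STree Q | NormalShape t ∧ t.numLeaves = n}
      {s : SchTree Q | SchWF s ∧ Alt s ∧ schLeaves s = n} := by
  refine ⟨?_, ?_, ?_⟩
  · rintro t ⟨hN, hn'⟩
    obtain ⟨hw, ha, hl⟩ := sQ_good t hN
    exact ⟨hw, ha, hn' ▸ hl⟩
  · rintro t ⟨hN, _⟩ t' ⟨hN', _⟩ h
    have := congrArg tQ h
    rwa [tQ_sQ, tQ_sQ] at this
  · rintro s ⟨hw, ha, hl⟩
    obtain ⟨hN, hnum, hsq⟩ := tQ_good s hw ha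
    exact ⟨tQ s, ⟨hN, hl ▸ hnum⟩, hsq⟩
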